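/- arXiv:2309.14813 — 5 statements merged into one kernel-verified Lean document; each statement's English description precedes it below -/
import Mathlib

section
/- Let V be a finite-dimensional real vector space, γ a symmetric bilinear form on V, ℓ a linear functional on V, and ℓ⁽²⁾ ∈ ℝ, and let 𝒜 be the associated symmetric bilinear form on V × ℝ. Assume 𝒜 is nondegenerate and the radical Rad γ = {X ∈ V : γ(X,·) = 0} is nonzero. Then the negative index of inertia of 𝒜 equals the negative index of inertia of γ plus 1, and the positive index of inertia of 𝒜 equals the positive index of inertia of γ plus 1. (Equivalently, the signature of 𝒜 is obtained from the signature of γ by removing the zero entry and adjoining one +1 and one −1.) -/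
open Module

/-- The bilinear form `𝒜` on `V × ℝ` associated to metric hypersurface data `(γ, ℓ, ℓ⁽²⁾)`:
`𝒜((W,a),(Z,b)) = γ(W,Z) + a·ℓ(Z) + b·ℓ(W) + a·b·ℓ⁽²⁾`. -/
noncomputable def Amap {V : Type*} [AddCommGroup V] [Module ℝ V]
    (γ : LinearMap.BilinForm ℝ V) (ℓ : Module.Dual ℝ V) (ℓ2 : ℝ) :
    LinearMap.BilinForm ℝ (V × ℝ) :=
  LinearMap.mk₂ ℝ
    (fun p q => γ p.1 q.1 + p.2 * ℓ q.1 + q.2 * ℓ p.1 + p.2 * q.2 * ℓ2)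
    (fun p p' q => by simp [map_add, LinearMap.add_apply]; ring)
    (fun c p q => by simp [map_smul, LinearMap.smul_apply, smul_eq_mul]; ring)
    (fun p q q' => by simp [map_add, LinearMap.add_apply]; ring)
    (fun c p q => by simp [map_smul, LinearMap.smul_apply, smul_eq_mul]; ring)

/-- The negative index of inertia of a bilinear form: the maximal dimension of a subspace
on which the form is negative definite. -/
noncomputable def negIndex {V : Type*} [AddCommGroup V] [Module ℝ V]
    (B : LinearMap.BilinForm ℝ V) : ℕ :=
  sSup {k : ℕ | ∃ W : Submodule ℝ V, Module.finrank ℝ W = k ∧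
    ∀ x ∈ W, x ≠ 0 → B x x < 0}

/-- The positive index of inertia of a bilinear form: the maximal dimension of a subspace
on which the form is positive definite. -/
noncomputable def posIndex {V : Type*} [AddCommGroup V] [Module ℝ V]
    (B : LinearMap.BilinForm ℝ V) : ℕ :=
  sSup {k : ℕ | ∃ W : Submodule ℝ V, Module.finrank ℝ W = k ∧
    ∀ x ∈ W, x ≠ 0 → 0 < B x x}


open Module LinearMap Submodule
section Helpers
variable {V : Type*} [AddCommGroup V] [Module ℝ V] [FiniteDimensional ℝ V]

def negSet (B : LinearMap.BilinForm ℝ V) : Set ℕ :=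
  {k : ℕ | ∃ W : Submodule ℝ V, Module.finrank ℝ W = k ∧
    ∀ x ∈ W, x ≠ 0 → B x x < 0}

lemma negSet_bdd (B : LinearMap.BilinForm ℝ V) : BddAbove (negSet B) := by
  refine ⟨finrank ℝ V, ?_⟩
  rintro k ⟨W, rfl, -⟩
  exact W.finrank_le

lemma negSet_nonempty (B : LinearMap.BilinForm ℝ V) : (negSet B).Nonempty := by
  refine ⟨0, ⊥, finrank_bot ℝ V, ?_⟩
  intro x hx hx0
  exact absurd ((Submodule.mem_bot ℝ).1 hx) hx0

lemma negIndexSpec (B : LinearMap.BilinForm ℝ V) :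
    ∃ W : Submodule ℝ V, finrank ℝ W = negIndex B ∧ ∀ x ∈ W, x ≠ 0 → B x x < 0 :=
  Nat.sSup_mem (negSet_nonempty B) (negSet_bdd B)

lemma le_negIndex (B : LinearMap.BilinForm ℝ V) {W : Submodule ℝ V}
    (h : ∀ x ∈ W, x ≠ 0 → B x x < 0) : finrank ℝ W ≤ negIndex B :=
  le_csSup (negSet_bdd B) ⟨W, rfl, h⟩

lemma posIndex_eq_negIndex_neg (B : LinearMap.BilinForm ℝ V) :
    posIndex B = negIndex (-B) := by
  unfold posIndex negIndex
  congr 1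
  ext k
  constructor
  · rintro ⟨W, h1, h2⟩
    exact ⟨W, h1, fun x hx hx0 => by
      simpa using h2 x hx hx0⟩
  · rintro ⟨W, h1, h2⟩
    refine ⟨W, h1, fun x hx hx0 => ?_⟩
    have := h2 x hx hx0
    simp only [LinearMap.neg_apply, neg_neg, Left.neg_neg_iff] at this ⊢
    linarith [this]

end Helpers
section Lower
variable {V : Type*} [AddCommGroup V] [Module ℝ V] [FiniteDimensional ℝ V]

lemma Amap_apply (γ : LinearMap.BilinForm ℝ V) (ℓ : Module.Dual ℝ V) (ℓ2 : ℝ)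
    (p q : V × ℝ) :
    Amap γ ℓ ℓ2 p q = γ p.1 q.1 + p.2 * ℓ q.1 + q.2 * ℓ p.1 + p.2 * q.2 * ℓ2 := rfl

lemma lower_neg (γ : LinearMap.BilinForm ℝ V) (ℓ : Module.Dual ℝ V) (ℓ2 : ℝ)
    (X : V) (hX : ∀ y, γ X y = 0) (hX' : ∀ y, γ y X = 0) (hℓX : ℓ X = 1) :
    negIndex γ + 1 ≤ negIndex (Amap γ ℓ ℓ2) := by
  set t : ℝ := (-1 - ℓ2) / 2 with ht
  set G : (V × ℝ) →ₗ[ℝ] V × ℝ :=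
    LinearMap.prod
      ((LinearMap.fst ℝ V ℝ) +
        LinearMap.smulRight
          (t • (LinearMap.snd ℝ V ℝ) - ℓ.comp (LinearMap.fst ℝ V ℝ)) X)
      (LinearMap.snd ℝ V ℝ) with hG
  have hGapp : ∀ p : V × ℝ, G p = (p.1 + (t * p.2 - ℓ p.1) • X, p.2) := by
    intro p
    simp [hG, LinearMap.prod_apply, LinearMap.smulRight_apply, smul_eq_mul]
  have hGval : ∀ p : V × ℝ, Amap γ ℓ ℓ2 (G p) (G p) = γ p.1 p.1 - p.2 ^ 2 := by
    intro p
    rw [hGapp, Amap_apply]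
    simp only [map_add, map_smul, LinearMap.add_apply, LinearMap.smul_apply,
      hX, hX', hℓX, smul_eq_mul, mul_zero, zero_mul, add_zero, mul_one]
    ring
  obtain ⟨N, hNrank, hNneg⟩ := negIndexSpec γ
  set f : (N × ℝ) →ₗ[ℝ] V × ℝ := G.comp ((N.subtype).prodMap (LinearMap.id : ℝ →ₗ[ℝ] ℝ))
    with hf
  have hfapp : ∀ p : N × ℝ, f p = G ((p.1 : V), p.2) := fun p => rfl
  have hfinj : Function.Injective f := by
    rw [← LinearMap.ker_eq_bot]
    rw [Submodule.eq_bot_iff]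
    rintro ⟨z, a⟩ hz
    have h0 : G ((z : V), a) = 0 := hz
    rw [hGapp] at h0
    have h2 : a = 0 := congrArg Prod.snd h0
    subst h2
    have h1 : (z : V) + (t * 0 - ℓ z) • X = 0 := congrArg Prod.fst h0
    have hz1 : (z : V) = (ℓ z) • X := by
      have := h1
      rw [mul_zero, zero_sub, neg_smul] at this
      linear_combination (norm := module) this
    have hzz : γ (z : V) (z : V) = 0 := by
      calc γ (z : V) (z : V) = γ ((ℓ z) • X) (z : V) := by rw [← hz1]
        _ = (ℓ z) * γ X (z : V) := by simp [map_smul]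
        _ = 0 := by rw [hX]; ring
    have hz0 : (z : V) = 0 := by
      by_contra hne
      exact absurd hzz (ne_of_lt (hNneg z z.2 (by simpa using hne)))
    have : z = 0 := Subtype.ext hz0
    simp [this, Prod.ext_iff]
  have hrange : finrank ℝ (LinearMap.range f) = negIndex γ + 1 := by
    rw [LinearMap.finrank_range_of_inj hfinj, Module.finrank_prod, hNrank,
      Module.finrank_self]
  have hdef : ∀ x ∈ LinearMap.range f, x ≠ 0 → Amap γ ℓ ℓ2 x x < 0 := by
    rintro x ⟨⟨z, a⟩, rfl⟩ hx0
    rw [hfapp, hGval]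
    have hzN : (z : V) ∈ N := z.2
    rcases eq_or_ne a 0 with rfl | ha
    · have hzne : (z : V) ≠ 0 := by
        intro h
        exact hx0 (by rw [hfapp]; simp [hGapp, h])
      have := hNneg z hzN hzne
      simpa using this
    · have h1 : γ (z : V) (z : V) ≤ 0 := by
        rcases eq_or_ne (z : V) 0 with h | h
        · simp [h]
        · exact le_of_lt (hNneg z hzN h)
      nlinarith [sq_pos_of_ne_zero ha]
  calc negIndex γ + 1 = finrank ℝ (LinearMap.range f) := hrange.symm
    _ ≤ negIndex (Amap γ ℓ ℓ2) := le_negIndex _ hdef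

end Lower
section Count
variable {V : Type*} [AddCommGroup V] [Module ℝ V] [FiniteDimensional ℝ V]

lemma sum_le_finrank (B : LinearMap.BilinForm ℝ V) :
    negIndex B + negIndex (-B) ≤ finrank ℝ V := by
  obtain ⟨N, hN, hNneg⟩ := negIndexSpec B
  obtain ⟨P, hP, hPneg⟩ := negIndexSpec (-B)
  have hdisj : N ⊓ P = ⊥ := by
    rw [Submodule.eq_bot_iff]
    intro x hx
    by_contra hx0
    have h1 := hNneg x hx.1 hx0
    have h2 := hPneg x hx.2 hx0
    simp only [LinearMap.neg_apply, Left.neg_neg_iff] at h2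
    linarith
  have := Submodule.finrank_sup_add_finrank_inf_eq N P
  rw [hdisj, finrank_bot, add_zero] at this
  calc negIndex B + negIndex (-B) = finrank ℝ ↥(N ⊔ P) := by rw [← hN, ← hP, this]
    _ ≤ finrank ℝ V := Submodule.finrank_le _

lemma span_negdef (B : LinearMap.BilinForm ℝ V) {n : ℕ} (v : Basis (Fin n) ℝ V)
    (horth : ∀ i j, i ≠ j → B (v i) (v j) = 0) (I : Finset (Fin n))
    (hI : ∀ i ∈ I, B (v i) (v i) < 0) : I.card ≤ negIndex B := by
  classical
  set W : Submodule ℝ V := Submodule.span ℝ (↑(I.image v) : Set V) with hW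
  have hsub : (↑(I.image v) : Set V) ⊆ Set.range v := by
    intro x hx
    simp only [Finset.coe_image, Set.mem_image, Finset.mem_coe] at hx
    obtain ⟨i, -, rfl⟩ := hx
    exact ⟨i, rfl⟩
  have hli : LinearIndependent ℝ ((↑) : (↑(I.image v) : Set V) → V) :=
    ((linearIndepOn_id_range_iff v.injective).mpr v.linearIndependent).mono hsub
  have hcard : finrank ℝ W = I.card := by
    rw [hW, finrank_span_finset_eq_card hli, Finset.card_image_of_injective _ v.injective]
  have hdef : ∀ x ∈ W, x ≠ 0 → B x x < 0 := by
    intro x hx hx0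
    obtain ⟨c, -, hc⟩ := mem_span_finset.1 hx
    rw [Finset.sum_image (fun i _ j _ h => v.injective h)] at hc
    set d : Fin n → ℝ := fun i => c (v i) with hd
    have hBde : B x x = ∑ i ∈ I, d i * (d i * B (v i) (v i)) := by
      rw [← hc]
      simp only [map_sum, map_smul, LinearMap.sum_apply, LinearMap.smul_apply,
        smul_eq_mul, Finset.mul_sum]
      refine Finset.sum_congr rfl fun i hi => ?_
      rw [Finset.sum_eq_single i]
      · intro j hj hji
        rw [horth j i hji, mul_zero, mul_zero]
      · intro h; exact absurd hi h
    have hex : ∃ i ∈ I, d i ≠ 0 := by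
      by_contra h
      push_neg at h
      apply hx0
      rw [← hc]
      exact Finset.sum_eq_zero fun i hi => by rw [show c (v i) = d i from rfl, h i hi, zero_smul]
    obtain ⟨i0, hi0, hd0⟩ := hex
    rw [hBde]
    have : ∑ i ∈ I, d i * (d i * B (v i) (v i)) < ∑ i ∈ I, (0 : ℝ) := by
      refine Finset.sum_lt_sum (fun i hi => ?_) ⟨i0, hi0, ?_⟩
      · nlinarith [hI i hi, sq_nonneg (d i)]
      · nlinarith [hI i0 hi0, sq_pos_of_ne_zero hd0]
    simpa using this
  calc I.card = finrank ℝ W := hcard.symm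
    _ ≤ negIndex B := le_negIndex B hdef

lemma count_ge (γ : LinearMap.BilinForm ℝ V) (hsym : γ.IsSymm)
    (hker : finrank ℝ (LinearMap.ker γ) ≤ 1) :
    finrank ℝ V ≤ negIndex γ + negIndex (-γ) + 1 := by
  classical
  haveI : Invertible (2 : ℝ) := invertibleOfNonzero two_ne_zero
  obtain ⟨v, hv⟩ := LinearMap.BilinForm.exists_orthogonal_basis (LinearMap.BilinForm.isSymm_iff.1 hsym)
  have horth : ∀ i j, i ≠ j → γ (v i) (v j) = 0 := LinearMap.isOrthoᵢ_def.1 hv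
  set Im : Finset (Fin (finrank ℝ V)) := Finset.univ.filter fun i => γ (v i) (v i) < 0
  set Ip : Finset (Fin (finrank ℝ V)) := Finset.univ.filter fun i => 0 < γ (v i) (v i)
  set I0 : Finset (Fin (finrank ℝ V)) := Finset.univ.filter fun i => γ (v i) (v i) = 0
  have h1 : Im.card ≤ negIndex γ :=
    span_negdef γ v horth Im fun i hi => (Finset.mem_filter.1 hi).2
  have h2 : Ip.card ≤ negIndex (-γ) := by
    refine span_negdef (-γ) v (fun i j h => by simp [horth i j h]) Ip fun i hi => ?_
    have := (Finset.mem_filter.1 hi).2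
    simp only [LinearMap.neg_apply]
    linarith
  have h3 : I0.card ≤ 1 := by
    have hmem : ∀ i ∈ I0, v i ∈ LinearMap.ker γ := by
      intro i hi
      rw [LinearMap.mem_ker]
      refine v.ext fun j => ?_
      rcases eq_or_ne i j with rfl | hij
      · simpa using (Finset.mem_filter.1 hi).2
      · simpa using horth i j hij
    set g : {i // i ∈ I0} → LinearMap.ker γ := fun i => ⟨v i, hmem i i.2⟩ with hg
    have hgli : LinearIndependent ℝ g := by
      apply LinearIndependent.of_comp (LinearMap.ker γ).subtype
      have : ((LinearMap.ker γ).subtype ∘ g) = v ∘ ((↑) : {i // i ∈ I0} → Fin _) := rfl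
      rw [this]
      exact v.linearIndependent.comp _ Subtype.val_injective
    calc I0.card = Fintype.card {i // i ∈ I0} := (Fintype.card_coe I0).symm
      _ ≤ finrank ℝ (LinearMap.ker γ) := hgli.fintype_card_le_finrank
      _ ≤ 1 := hker
  have hcover : (Finset.univ : Finset (Fin (finrank ℝ V))) ⊆ Im ∪ Ip ∪ I0 := by
    intro i _
    simp only [Finset.mem_union, Im, Ip, I0, Finset.mem_filter, Finset.mem_univ, true_and]
    rcases lt_trichotomy (γ (v i) (v i)) 0 with h | h | h
    · exact Or.inl (Or.inl h)
    · exact Or.inr h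
    · exact Or.inl (Or.inr h)
  have hn : finrank ℝ V = (Finset.univ : Finset (Fin (finrank ℝ V))).card := by
    simp
  calc finrank ℝ V = (Finset.univ : Finset (Fin (finrank ℝ V))).card := hn
    _ ≤ (Im ∪ Ip ∪ I0).card := Finset.card_le_card hcover
    _ ≤ (Im ∪ Ip).card + I0.card := Finset.card_union_le _ _
    _ ≤ Im.card + Ip.card + I0.card := by
        have := Finset.card_union_le Im Ip
        omega
    _ ≤ negIndex γ + negIndex (-γ) + 1 := by omega

end Count
section Key
variable {V : Type*} [AddCommGroup V] [Module ℝ V] [FiniteDimensional ℝ V]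

lemma Amap_neg (γ : LinearMap.BilinForm ℝ V) (ℓ : Module.Dual ℝ V) (ℓ2 : ℝ) :
    Amap (-γ) (-ℓ) (-ℓ2) = -(Amap γ ℓ ℓ2) := by
  refine LinearMap.ext fun p => LinearMap.ext fun q => ?_
  show ((-γ) p.1) q.1 + p.2 * (-ℓ) q.1 + q.2 * (-ℓ) p.1 + p.2 * q.2 * (-ℓ2)
      = -((γ p.1) q.1 + p.2 * ℓ q.1 + q.2 * ℓ p.1 + p.2 * q.2 * ℓ2)
  simp only [LinearMap.neg_apply]
  ring

lemma ker_neg' (γ : LinearMap.BilinForm ℝ V) : LinearMap.ker (-γ) = LinearMap.ker γ := by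
  ext x
  simp [LinearMap.mem_ker, neg_eq_zero]

lemma nondeg_neg {M : Type*} [AddCommGroup M] [Module ℝ M] {B : LinearMap.BilinForm ℝ M}
    (hB : B.Nondegenerate) : (-B).Nondegenerate := by
  refine ⟨fun x hx => hB.1 x fun y => ?_, fun x hx => hB.2 x fun y => ?_⟩
  · have := hx y
    simpa [neg_eq_zero] using this
  · have := hx y
    simpa [neg_eq_zero] using this

lemma key_neg (γ : LinearMap.BilinForm ℝ V) (hγsym : ∀ X Y : V, γ X Y = γ Y X)
    (ℓ : Module.Dual ℝ V) (ℓ2 : ℝ)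
    (hA : (Amap γ ℓ ℓ2).Nondegenerate)
    (hrad : LinearMap.ker γ ≠ ⊥) :
    negIndex (Amap γ ℓ ℓ2) = negIndex γ + 1 := by
  obtain ⟨X₀, hX₀mem, hX₀ne⟩ := (LinearMap.ker γ).ne_bot_iff.1 hrad
  have hγX₀ : γ X₀ = 0 := LinearMap.mem_ker.1 hX₀mem
  have hℓX₀ : ℓ X₀ ≠ 0 := by
    intro h
    apply hX₀ne
    have h0 : (X₀, (0 : ℝ)) = 0 := by
      refine hA.1 _ fun q => ?_
      show (γ X₀) q.1 + 0 * ℓ q.1 + q.2 * ℓ X₀ + 0 * q.2 * ℓ2 = 0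
      rw [hγX₀, h]
      simp
    exact congrArg Prod.fst h0
  set X : V := (ℓ X₀)⁻¹ • X₀ with hXdef
  have hℓX : ℓ X = 1 := by
    rw [hXdef, map_smul, smul_eq_mul, inv_mul_cancel₀ hℓX₀]
  have hXl : ∀ y, γ X y = 0 := by
    intro y
    rw [hXdef, map_smul, hγX₀]
    simp
  have hXr : ∀ y, γ y X = 0 := fun y => by rw [hγsym y X]; exact hXl y
  have low1 : negIndex γ + 1 ≤ negIndex (Amap γ ℓ ℓ2) :=
    lower_neg γ ℓ ℓ2 X hXl hXr hℓX
  have low2 : negIndex (-γ) + 1 ≤ negIndex (-(Amap γ ℓ ℓ2)) := by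
    rw [← Amap_neg]
    refine lower_neg (-γ) (-ℓ) (-ℓ2) (-X) (fun y => by simp [hXl]) (fun y => by simp [hXr])
      (by simp [hℓX])
  have hsum : negIndex (Amap γ ℓ ℓ2) + negIndex (-(Amap γ ℓ ℓ2)) ≤ finrank ℝ V + 1 := by
    have := sum_le_finrank (Amap γ ℓ ℓ2)
    rwa [Module.finrank_prod, Module.finrank_self] at this
  have hker : finrank ℝ (LinearMap.ker γ) ≤ 1 := by
    have hinj : Function.Injective (ℓ.comp (LinearMap.ker γ).subtype) := by
      rw [← LinearMap.ker_eq_bot, Submodule.eq_bot_iff]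
      intro z hz
      have hz1 : ℓ (z : V) = 0 := hz
      have hz2 : γ (z : V) = 0 := LinearMap.mem_ker.1 z.2
      have h0 : ((z : V), (0 : ℝ)) = 0 := by
        refine hA.1 _ fun q => ?_
        show (γ (z : V)) q.1 + 0 * ℓ q.1 + q.2 * ℓ (z : V) + 0 * q.2 * ℓ2 = 0
        rw [hz2, hz1]
        simp
      exact Subtype.ext (congrArg Prod.fst h0)
    calc finrank ℝ (LinearMap.ker γ) ≤ finrank ℝ ℝ :=
          LinearMap.finrank_le_finrank_of_injective hinj
      _ = 1 := Module.finrank_self ℝ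
  have hcount : finrank ℝ V ≤ negIndex γ + negIndex (-γ) + 1 :=
    count_ge γ (LinearMap.BilinForm.isSymm_def.2 fun x y => by simpa using (hγsym x y)) hker
  omega

end Key
/-- If `𝒜` is nondegenerate and `Rad γ ≠ 0`, then the signature of `𝒜` is that of `γ`
with the zero removed and one `+1` and one `−1` adjoined. -/
theorem signature_Amap_of_null_point {V : Type*} [AddCommGroup V] [Module ℝ V]
    [FiniteDimensional ℝ V]
    (γ : LinearMap.BilinForm ℝ V) (hγsym : ∀ X Y : V, γ X Y = γ Y X)
    (ℓ : Module.Dual ℝ V) (ℓ2 : ℝ)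
    (hA : (Amap γ ℓ ℓ2).Nondegenerate)
    (hrad : LinearMap.ker γ ≠ ⊥) :
    negIndex (Amap γ ℓ ℓ2) = negIndex γ + 1 ∧
      posIndex (Amap γ ℓ ℓ2) = posIndex γ + 1 := by
  refine ⟨key_neg γ hγsym ℓ ℓ2 hA hrad, ?_⟩
  have hA' : (Amap (-γ) (-ℓ) (-ℓ2)).Nondegenerate := by
    rw [Amap_neg]
    exact nondeg_neg hA
  have hrad' : LinearMap.ker (-γ) ≠ ⊥ := by
    rw [ker_neg']
    exact hrad
  have := key_neg (-γ) (fun X Y => by simp [hγsym X Y]) (-ℓ) (-ℓ2) hA' hrad'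
  rw [Amap_neg] at this
  rw [posIndex_eq_negIndex_neg, posIndex_eq_negIndex_neg]
  exact this
end

section
/- Let V be a finite-dimensional real vector space, γ a symmetric bilinear form on V, ℓ a linear functional on V, and ℓ⁽²⁾ ∈ ℝ, and let 𝒜 be the associated symmetric bilinear form on V × ℝ. Assume 𝒜 is nondegenerate and the radical Rad γ is nonzero. Then 𝒜 has Lorentzian signature (i.e., its negative index of inertia equals 1) if and only if γ is positive semidefinite. -/
open Module

/-- span of a vector with negative value gives membership of 1. -/
lemma one_mem_negSet {M : Type*} [AddCommGroup M] [Module ℝ M]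
    (B : LinearMap.BilinForm ℝ M) (v : M) (hv : B v v < 0) :
    (1 : ℕ) ∈ {k : ℕ | ∃ W : Submodule ℝ M, Module.finrank ℝ W = k ∧
      ∀ x ∈ W, x ≠ 0 → B x x < 0} := by
  have hv0 : v ≠ 0 := by rintro rfl; simp at hv
  refine ⟨Submodule.span ℝ {v}, finrank_span_singleton hv0, ?_⟩
  intro x hx hx0
  obtain ⟨a, rfl⟩ := Submodule.mem_span_singleton.mp hx
  have ha : a ≠ 0 := by rintro rfl; simp at hx0
  have : B (a • v) (a • v) = a ^ 2 * B v v := by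
    simp [map_smul, LinearMap.smul_apply, smul_eq_mul]; ring
  rw [this]
  exact mul_neg_of_pos_of_neg (by positivity) hv

lemma two_mem_negSet {M : Type*} [AddCommGroup M] [Module ℝ M]
    (B : LinearMap.BilinForm ℝ M) (v1 v2 : M)
    (hli : LinearIndependent ℝ ![v1, v2])
    (h1 : B v1 v1 < 0) (h2 : B v2 v2 < 0) (hsym : B v1 v2 = B v2 v1)
    (hdet : (B v1 v2) ^ 2 < B v1 v1 * B v2 v2) :
    (2 : ℕ) ∈ {k : ℕ | ∃ W : Submodule ℝ M, Module.finrank ℝ W = k ∧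
      ∀ x ∈ W, x ≠ 0 → B x x < 0} := by
  refine ⟨Submodule.span ℝ {v1, v2}, ?_, ?_⟩
  · have := finrank_span_eq_card hli
    rw [show ({v1, v2} : Set M) = Set.range ![v1, v2] by
      ext x; simp [Fin.exists_fin_two, or_comm]]
    simpa using this
  · intro x hx hx0
    obtain ⟨a, b, rfl⟩ := Submodule.mem_span_pair.mp hx
    have hab : ¬(a = 0 ∧ b = 0) := by
      rintro ⟨rfl, rfl⟩; simp at hx0
    have hexp : B (a • v1 + b • v2) (a • v1 + b • v2) =
        a ^ 2 * B v1 v1 + 2 * a * b * B v1 v2 + b ^ 2 * B v2 v2 := by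
      simp [map_add, map_smul, LinearMap.add_apply, LinearMap.smul_apply, smul_eq_mul, hsym]
      ring
    rw [hexp]
    rcases eq_or_ne b 0 with rfl | hb
    · have ha : a ≠ 0 := by tauto
      have : a ^ 2 > 0 := by positivity
      nlinarith
    · have hb2 : b ^ 2 > 0 := by positivity
      have key : B v1 v1 * (a ^ 2 * B v1 v1 + 2 * a * b * B v1 v2 + b ^ 2 * B v2 v2)
          = (a * B v1 v1 + b * B v1 v2) ^ 2 + b ^ 2 * (B v1 v1 * B v2 v2 - (B v1 v2) ^ 2) := by
        ring
      nlinarith [sq_nonneg (a * B v1 v1 + b * B v1 v2)]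

set_option maxHeartbeats 2000000 in
/-- If `𝒜` is nondegenerate and `Rad γ ≠ 0`, then `𝒜` is Lorentzian (negative index `1`)
if and only if `γ` is positive semidefinite. -/
theorem Amap_lorentzian_iff_posSemidef {V : Type*} [AddCommGroup V] [Module ℝ V]
    [FiniteDimensional ℝ V]
    (γ : LinearMap.BilinForm ℝ V) (hγsym : ∀ X Y : V, γ X Y = γ Y X)
    (ℓ : Module.Dual ℝ V) (ℓ2 : ℝ)
    (hA : (Amap γ ℓ ℓ2).Nondegenerate)
    (hrad : LinearMap.ker γ ≠ ⊥) :
    negIndex (Amap γ ℓ ℓ2) = 1 ↔ ∀ X : V, 0 ≤ γ X X := by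
  classical
  set A := Amap γ ℓ ℓ2 with hAdef
  have hAval : ∀ p q : V × ℝ, A p q = γ p.1 q.1 + p.2 * ℓ q.1 + q.2 * ℓ p.1 + p.2 * q.2 * ℓ2 := by
    intro p q; rfl
  set S := {k : ℕ | ∃ W : Submodule ℝ (V × ℝ), Module.finrank ℝ W = k ∧
      ∀ x ∈ W, x ≠ 0 → A x x < 0} with hSdef
  have hnegIdx : negIndex A = sSup S := rfl
  -- radical element
  obtain ⟨X, hXmem, hX0⟩ := Submodule.exists_mem_ne_zero_of_ne_bot hrad
  have hXker : ∀ Y : V, γ X Y = 0 := by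
    intro Y
    have : γ X = 0 := LinearMap.mem_ker.mp hXmem
    rw [this]; rfl
  have hℓX : ℓ X ≠ 0 := by
    intro h
    apply hX0
    have h0 : ((X, (0 : ℝ)) : V × ℝ) = 0 := by
      apply hA.1
      intro q
      rw [hAval]
      simp [hXker q.1, h]
    exact congrArg Prod.fst h0
  -- the vector (t • X, 1) with A-value s, for any target s
  have hvval : ∀ s : ℝ, A ((((s - ℓ2) / (2 * ℓ X)) • X, 1)) ((((s - ℓ2) / (2 * ℓ X)) • X, 1)) = s := by
    intro s
    rw [hAval]
    simp only [map_smul, LinearMap.smul_apply, smul_eq_mul, hXker, mul_zero]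
    field_simp
    ring
  have h1S : (1 : ℕ) ∈ S := by
    have := one_mem_negSet A ((((-1 : ℝ) - ℓ2) / (2 * ℓ X)) • X, 1) (by rw [hvval]; norm_num)
    exact this
  have hbdd : BddAbove S := by
    refine ⟨finrank ℝ (V × ℝ), ?_⟩
    rintro k ⟨W, rfl, -⟩
    exact Submodule.finrank_le W
  constructor
  · -- Lorentzian → semidefinite
    intro hL
    by_contra hcon
    push_neg at hcon
    obtain ⟨Y, hY⟩ := hcon
    -- build 2-dim negative subspace
    have hY0 : Y ≠ 0 := by rintro rfl; simp at hY
    set s : ℝ := min (-1) ((ℓ Y) ^ 2 / γ Y Y - 1) with hs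
    set t : ℝ := (s - ℓ2) / (2 * ℓ X) with ht
    set v1 : V × ℝ := (Y, 0) with hv1
    set v2 : V × ℝ := (t • X, 1) with hv2
    have hq1 : A v1 v1 = γ Y Y := by rw [hAval]; simp [hv1]
    have hq2 : A v2 v2 = s := hvval s
    have hc : A v1 v2 = ℓ Y := by
      rw [hAval]
      simp [hv1, hv2, map_smul, LinearMap.smul_apply, smul_eq_mul, hγsym Y X, hXker Y]
    have hc' : A v2 v1 = ℓ Y := by
      rw [hAval]
      simp [hv1, hv2, map_smul, LinearMap.smul_apply, smul_eq_mul, hXker Y]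
    have hs_neg : s < 0 := lt_of_le_of_lt (min_le_left _ _) (by norm_num)
    have hdet : (ℓ Y) ^ 2 < γ Y Y * s := by
      have h1 : s ≤ (ℓ Y) ^ 2 / γ Y Y - 1 := min_le_right _ _
      have h2 : γ Y Y * s ≥ γ Y Y * ((ℓ Y) ^ 2 / γ Y Y - 1) := by
        exact mul_le_mul_of_nonpos_left h1 (le_of_lt hY)
      have hne : γ Y Y ≠ 0 := ne_of_lt hY
      have h3 : γ Y Y * ((ℓ Y) ^ 2 / γ Y Y - 1) = (ℓ Y) ^ 2 - γ Y Y := by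
        field_simp
      nlinarith
    have hli : LinearIndependent ℝ ![v1, v2] := by
      rw [LinearIndependent.pair_iff]
      intro a b hab
      have hsnd : a * 0 + b * 1 = 0 := congrArg Prod.snd hab
      have hb : b = 0 := by simpa using hsnd
      subst hb
      have hfst : a • Y = 0 := by
        have := congrArg Prod.fst hab
        simpa [hv1, hv2] using this
      rcases smul_eq_zero.mp hfst with h | h
      · exact ⟨h, rfl⟩
      · exact absurd h hY0
    have h2S : (2 : ℕ) ∈ S := by
      apply two_mem_negSet A v1 v2 hli (by rw [hq1]; exact hY) (by rw [hq2]; exact hs_neg)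
        (by rw [hc, hc'])
      rw [hq1, hq2, hc]; exact hdet
    have : (2 : ℕ) ≤ negIndex A := by
      rw [hnegIdx]; exact le_csSup hbdd h2S
    omega
  · -- semidefinite → Lorentzian
    intro hpos
    rw [hnegIdx]
    apply le_antisymm
    · apply csSup_le ⟨1, h1S⟩
      rintro k ⟨W, rfl, hW⟩
      by_contra hk
      push_neg at hk
      -- finrank W ≥ 2 : find nonzero element with second coord 0
      set f : W →ₗ[ℝ] ℝ := (LinearMap.snd ℝ V ℝ).comp W.subtype with hf
      have hrank : finrank ℝ (LinearMap.range f) + finrank ℝ (LinearMap.ker f)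
          = finrank ℝ W := LinearMap.finrank_range_add_finrank_ker f
      have hrle : finrank ℝ (LinearMap.range f) ≤ 1 := by
        have := Submodule.finrank_le (LinearMap.range f)
        simpa using this
      have hker_pos : 0 < finrank ℝ (LinearMap.ker f) := by omega
      obtain ⟨w, hw0⟩ := (Module.finrank_pos_iff_exists_ne_zero (R := ℝ) (M := LinearMap.ker f)).mp hker_pos
      rcases w with ⟨⟨p, hpW⟩, hpker⟩
      have hp2 : p.2 = 0 := by
        simpa [hf] using LinearMap.mem_ker.mp hpker
      have hpne : p ≠ 0 := by
        intro h
        apply hw0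
        simp [Subtype.ext_iff, h]
      have hlt := hW p hpW hpne
      have hge : 0 ≤ A p p := by
        rw [hAval, hp2]
        simpa using hpos p.1
      linarith
    · exact le_csSup hbdd h1S
end

section
/- Let V be a finite-dimensional real vector space, γ a symmetric bilinear form on V, ℓ a linear functional on V, and ℓ⁽²⁾ ∈ ℝ, and let 𝒜 be the associated symmetric bilinear form on V × ℝ. Then the following are equivalent: (a) 𝒜 is nondegenerate and the radical Rad γ is nonzero; (b) Rad γ is one-dimensional and ℓ(e) ≠ 0 for every nonzero vector e ∈ Rad γ. (This is the pointwise criterion characterizing null metric hypersurface data.) -/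
open Module

/-- Pointwise criterion for null metric hypersurface data: `𝒜` is nondegenerate with
`Rad γ ≠ 0` if and only if `Rad γ` is one-dimensional and `ℓ` does not vanish on any
nonzero element of `Rad γ`. -/
theorem nullMetricData_iff {V : Type*} [AddCommGroup V] [Module ℝ V]
    [FiniteDimensional ℝ V]
    (γ : LinearMap.BilinForm ℝ V) (hγsym : ∀ X Y : V, γ X Y = γ Y X)
    (ℓ : Module.Dual ℝ V) (ℓ2 : ℝ) :
    ((Amap γ ℓ ℓ2).Nondegenerate ∧ LinearMap.ker γ ≠ ⊥) ↔
      (Module.finrank ℝ (LinearMap.ker γ) = 1 ∧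
        ∀ e ∈ LinearMap.ker γ, e ≠ 0 → ℓ e ≠ 0) := by
  constructor
  · rintro ⟨hA, hker⟩
    have hℓ : ∀ e ∈ LinearMap.ker γ, e ≠ 0 → ℓ e ≠ 0 := by
      intro e he hne hle
      apply hne
      have hγe : γ e = 0 := he
      have : (e, (0:ℝ)) = (0 : V × ℝ) := by
        apply hA.1
        intro q
        simp [Amap, hγe, hle]
      simpa using congrArg Prod.fst this
    refine ⟨?_, hℓ⟩
    have hinj : Function.Injective (ℓ.domRestrict (LinearMap.ker γ)) := by
      rw [← LinearMap.ker_eq_bot, eq_bot_iff]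
      rintro ⟨e, he⟩ h
      simp only [LinearMap.mem_ker, LinearMap.domRestrict_apply] at h
      have : e = 0 := by
        by_contra hne
        exact hℓ e he hne h
      simpa [Submodule.mem_bot, Submodule.mk_eq_zero] using this
    have hle1 : Module.finrank ℝ (LinearMap.ker γ) ≤ Module.finrank ℝ ℝ :=
      LinearMap.finrank_le_finrank_of_injective hinj
    rw [Module.finrank_self] at hle1
    have hge1 : 0 < Module.finrank ℝ (LinearMap.ker γ) := by
      haveI : Nontrivial (LinearMap.ker γ) :=
        Submodule.nontrivial_iff_ne_bot.mpr hker
      exact Module.finrank_pos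
    omega
  · rintro ⟨hdim, hℓ⟩
    have hker : LinearMap.ker γ ≠ ⊥ := by
      intro h
      rw [h] at hdim
      simp [finrank_bot] at hdim
    obtain ⟨e, he, hne⟩ := Submodule.exists_mem_ne_zero_of_ne_bot hker
    have hγe : γ e = 0 := he
    refine ⟨?_, hker⟩
    suffices hL : (Amap γ ℓ ℓ2).SeparatingLeft from
      ⟨hL, fun q hq => hL q (fun p => by
        rw [← hq p]; simp only [Amap, LinearMap.mk₂_apply, hγsym q.1 p.1]; ring)⟩
    intro p hp
    have h1 : ∀ Z : V, γ p.1 Z + p.2 * ℓ Z = 0 := by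
      intro Z
      have := hp (Z, 0)
      simpa [Amap] using this
    have h2 : ℓ p.1 + p.2 * ℓ2 = 0 := by
      have := hp (0, 1)
      simpa [Amap] using this
    have ha : p.2 = 0 := by
      have h1e := h1 e
      have : γ p.1 e = 0 := by rw [hγsym]; simp [hγe]
      rw [this, zero_add] at h1e
      exact (mul_eq_zero.mp h1e).resolve_right (hℓ e he hne)
    have hW : p.1 ∈ LinearMap.ker γ := by
      rw [LinearMap.mem_ker]
      ext Z
      have := h1 Z
      rw [ha, zero_mul, add_zero] at this
      simpa using this
    have hW0 : p.1 = 0 := by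
      by_contra hne'
      apply hℓ p.1 hW hne'
      rw [ha, zero_mul, add_zero] at h2
      exact h2
    exact Prod.ext hW0 ha
end

section
/- Let (W, g) be a finite-dimensional real vector space with a nondegenerate symmetric bilinear form g, T ⊂ W a hyperplane, ζ ∈ W \ T, and let (γ, ℓ, ℓ⁽²⁾) be the induced data on T with associated nondegenerate form 𝒜 on T × ℝ. Let (P, n, n⁽²⁾) be the components of the inverse of 𝒜 (P a symmetric bilinear form on T*, n ∈ T, n⁽²⁾ ∈ ℝ). Let 𝛎 ∈ W* be the unique linear functional vanishing on T with 𝛎(ζ) = 1, and let ν ∈ W be the vector with g(ν,·) = 𝛎. Then ν = n⁽²⁾·ζ + n (regarding n ∈ T ⊂ W) and g(ν, ν) = n⁽²⁾. In particular, at null points (n⁽²⁾ = 0) the normal ν coincides with n. -/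
open Module

/-- The vector of `T` corresponding to `P(ρ,·) ∈ T**`, via the canonical
identification `T ≅ T**`. -/
noncomputable def Pvec {V : Type*} [AddCommGroup V] [Module ℝ V] [FiniteDimensional ℝ V]
    (P : LinearMap.BilinForm ℝ (Module.Dual ℝ V)) (ρ : Module.Dual ℝ V) : V :=
  (Module.evalEquiv ℝ V).symm (P ρ)

/-- For the data induced on a hyperplane `T ⊂ (W,g)` by a rigging `ζ`, with `(P, n, n⁽²⁾)`
the components of the inverse of `𝒜`: if `nuF` is the unique functional vanishing on `T` with
`nuF(ζ) = 1` and `ν` the vector with `g(ν,·) = nuF`, then `ν = n⁽²⁾·ζ + n` and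
`g(ν,ν) = n⁽²⁾`. -/
theorem normal_decomposition {W : Type*} [AddCommGroup W] [Module ℝ W]
    [FiniteDimensional ℝ W]
    (g : LinearMap.BilinForm ℝ W) (hgsym : ∀ x y : W, g x y = g y x)
    (hg : g.Nondegenerate)
    (T : Submodule ℝ W) (hT : Module.finrank ℝ T + 1 = Module.finrank ℝ W)
    (ζ : W) (hζ : ζ ∉ T)
    (hA : (Amap (g.restrict T) ((g ζ).comp T.subtype) (g ζ ζ)).Nondegenerate)
    (P : LinearMap.BilinForm ℝ (Module.Dual ℝ T)) (hPsym : ∀ α β, P α β = P β α)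
    (n : T) (n2 : ℝ)
    (hinv : ∀ (α : Module.Dual ℝ T) (a : ℝ) (Z : T) (b : ℝ),
      Amap (g.restrict T) ((g ζ).comp T.subtype) (g ζ ζ)
        (Pvec P α + a • n, α n + a * n2) (Z, b) = α Z + a * b)
    (nuF : Module.Dual ℝ W) (hnuFT : ∀ x ∈ T, nuF x = 0) (hnuFζ : nuF ζ = 1)
    (ν : W) (hν : g ν = nuF) :
    ν = n2 • ζ + (n : W) ∧ g ν ν = n2 := by
  -- Specialize `hinv` to extract the key identities.
  have h1 : ∀ Z : T, g (n2 • ζ + (n : W)) (Z : W) = 0 := by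
    intro Z
    have h := hinv 0 1 Z 0
    rw [show Pvec P (0 : Module.Dual ℝ T) = 0 by
      unfold Pvec; rw [map_zero]; exact LinearEquiv.map_zero _] at h
    simp [Amap, LinearMap.restrict_apply] at h
    have hgn : g (n : W) (Z : W) + n2 * g ζ (Z : W) = 0 := by linarith
    simp [map_add, map_smul, LinearMap.add_apply, LinearMap.smul_apply, smul_eq_mul]
    linarith
  have h2 : g (n2 • ζ + (n : W)) ζ = 1 := by
    have h := hinv 0 1 0 1
    rw [show Pvec P (0 : Module.Dual ℝ T) = 0 by
      unfold Pvec; rw [map_zero]; exact LinearEquiv.map_zero _] at h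
    simp [Amap, LinearMap.restrict_apply] at h
    have := hgsym (n : W) ζ
    simp [map_add, map_smul, LinearMap.add_apply, LinearMap.smul_apply, smul_eq_mul]
    linarith
  -- T together with ζ spans W.
  have htop : T ⊔ (ℝ ∙ ζ) = ⊤ := by
    have hlt : T < T ⊔ (ℝ ∙ ζ) :=
      left_lt_sup.mpr (fun h => hζ (h (Submodule.mem_span_singleton_self ζ)))
    have h1' := Submodule.finrank_lt_finrank_of_lt hlt
    have h2' := Submodule.finrank_le (T ⊔ (ℝ ∙ ζ))
    exact Submodule.eq_top_of_finrank_eq (by omega)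
  have key : ∀ x : W, g (n2 • ζ + (n : W)) x = nuF x := by
    intro x
    have hx : x ∈ T ⊔ (ℝ ∙ ζ) := htop ▸ Submodule.mem_top
    obtain ⟨y, hy, z, hz, rfl⟩ := Submodule.mem_sup.mp hx
    obtain ⟨c, rfl⟩ := Submodule.mem_span_singleton.mp hz
    have := h1 ⟨y, hy⟩
    have h2' := h2
    simp only [map_add, map_smul, LinearMap.add_apply, LinearMap.smul_apply, smul_eq_mul] at this h2' ⊢
    rw [hnuFT y hy, hnuFζ]
    linear_combination this + c * h2' 
  have hνeq : ν = n2 • ζ + (n : W) := by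
    have hz : ∀ y, g (ν - (n2 • ζ + (n : W))) y = 0 := by
      intro y
      have : g ν y = nuF y := by rw [hν]
      rw [map_sub, LinearMap.sub_apply, this, key y, sub_self]
    exact sub_eq_zero.mp (hg.1 _ hz)
  refine ⟨hνeq, ?_⟩
  have : g ν ν = nuF ν := by rw [hν]
  rw [this, hνeq, map_add, map_smul, hnuFζ, hnuFT (n : W) n.2, smul_eq_mul]
  ring
end

section
/- Let (W, g) be a finite-dimensional real vector space with a nondegenerate symmetric bilinear form g, T ⊂ W a hyperplane, ζ ∈ W \ T, and let (γ, ℓ, ℓ⁽²⁾) be the induced data on T with associated nondegenerate form 𝒜 on T × ℝ and inverse components (P, n, n⁽²⁾). Then the inverse metric g⁻¹ (the induced symmetric bilinear form on W*) decomposes as: g⁻¹(α, β) = P(α|_T, β|_T) + α(ζ)·β(n) + β(ζ)·α(n) + n⁽²⁾·α(ζ)·β(ζ) for all α, β ∈ W*, where n ∈ T is regarded as a vector of W. -/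
open Module

/-- For the data induced on a hyperplane `T ⊂ (W,g)` by a rigging `ζ`, with `(P, n, n⁽²⁾)`
the components of the inverse of `𝒜`: the inverse metric decomposes as
`g⁻¹(α,β) = P(α|_T, β|_T) + α(ζ)·β(n) + β(ζ)·α(n) + n⁽²⁾·α(ζ)·β(ζ)`, where
`g⁻¹(α,β) = α(β♯)` and `β♯` is the unique vector with `g(β♯,·) = β`. -/
theorem inverse_metric_decomposition {W : Type*} [AddCommGroup W] [Module ℝ W]
    [FiniteDimensional ℝ W]
    (g : LinearMap.BilinForm ℝ W) (hgsym : ∀ x y : W, g x y = g y x)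
    (hg : g.Nondegenerate)
    (T : Submodule ℝ W) (hT : Module.finrank ℝ T + 1 = Module.finrank ℝ W)
    (ζ : W) (hζ : ζ ∉ T)
    (hA : (Amap (g.restrict T) ((g ζ).comp T.subtype) (g ζ ζ)).Nondegenerate)
    (P : LinearMap.BilinForm ℝ (Module.Dual ℝ T)) (hPsym : ∀ α β, P α β = P β α)
    (n : T) (n2 : ℝ)
    (hinv : ∀ (α : Module.Dual ℝ T) (a : ℝ) (Z : T) (b : ℝ),
      Amap (g.restrict T) ((g ζ).comp T.subtype) (g ζ ζ)
        (Pvec P α + a • n, α n + a * n2) (Z, b) = α Z + a * b) :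
    ∀ (α β : Module.Dual ℝ W) (y : W), g y = β →
      α y = P (α.comp T.subtype) (β.comp T.subtype)
        + α ζ * β (n : W) + β ζ * α (n : W) + n2 * (α ζ) * (β ζ) := by
  intro α β y hy
  set ρ : Module.Dual ℝ T := β.comp T.subtype with hρ
  set x : T := Pvec P ρ + (β ζ) • n with hx
  set c : ℝ := ρ n + (β ζ) * n2 with hc
  have key2 : ∀ (Z : T) (b : ℝ), g ((x:W) + c • ζ) ((Z:W) + b • ζ) = β ((Z:W) + b • ζ) := by
    intro Z b
    have h := hinv ρ (β ζ) Z b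
    rw [← hx, ← hc] at h
    simp only [Amap, LinearMap.mk₂_apply, LinearMap.BilinForm.restrict_apply,
      LinearMap.domRestrict_apply, LinearMap.comp_apply, Submodule.coe_subtype, hρ] at h
    have h1 := hgsym (x : W) ζ
    simp only [map_add, map_smul, LinearMap.add_apply, LinearMap.smul_apply, smul_eq_mul]
    linear_combination h + b * h1
  have hsup : T ⊔ Submodule.span ℝ {ζ} = ⊤ := by
    have hlt : T < T ⊔ Submodule.span ℝ {ζ} := by
      refine lt_of_le_of_ne le_sup_left (fun h => hζ ?_)
      rw [h]
      exact Submodule.mem_sup_right (Submodule.mem_span_singleton_self ζ)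
    have h1 : Module.finrank ℝ T < Module.finrank ℝ (T ⊔ Submodule.span ℝ {ζ} : Submodule ℝ W) :=
      Submodule.finrank_lt_finrank_of_lt hlt
    have h2 : Module.finrank ℝ (T ⊔ Submodule.span ℝ {ζ} : Submodule ℝ W)
        ≤ Module.finrank ℝ W := Submodule.finrank_le _
    exact Submodule.eq_top_of_finrank_eq (le_antisymm h2 (by omega))
  have hall : ∀ w : W, g ((x:W) + c • ζ) w = β w := by
    intro w
    have hw : w ∈ T ⊔ Submodule.span ℝ {ζ} := hsup ▸ Submodule.mem_top
    rcases Submodule.mem_sup.mp hw with ⟨Z, hZ, u, hu, rfl⟩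
    rcases Submodule.mem_span_singleton.mp hu with ⟨b, rfl⟩
    exact key2 ⟨Z, hZ⟩ b
  have hy' : y = (x:W) + c • ζ := by
    have hz : ∀ w : W, g (y - ((x:W) + c • ζ)) w = 0 := by
      intro w
      simp only [map_sub, LinearMap.sub_apply, hall w, hy]
      ring
    exact sub_eq_zero.mp (hg.1 _ hz)
  have hαx : α ((Pvec P ρ : T) : W) = P (α.comp T.subtype) ρ := by
    have h3 : (α.comp T.subtype) (Pvec P ρ) = P ρ (α.comp T.subtype) :=
      Module.apply_evalEquiv_symm_apply _ _ _ _
    rw [hPsym]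
    exact h3
  have hρn : ρ n = β (n : W) := rfl
  rw [hy']
  simp only [map_add, map_smul, hx, Submodule.coe_add, Submodule.coe_smul, smul_eq_mul]
  rw [hαx, hc, hρn]
  ring
end
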